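/- For every real x > 0, 1/(3x(x+1)) - 1/(15x²(x+1)²) < 2ψ(x+1) - ln(x(x+1)) < 1/(3x(x+1)) - 1/(15x²(x+1)²) + 8/(315x³(x+1)³). -/

import Mathlib

open Real Set Filter Topology


noncomputable def digamma (x : ℝ) : ℝ := deriv (fun y => Real.log (Real.Gamma y)) x

lemma diffLG {x : ℝ} (hx : 0 < x) :
    DifferentiableAt ℝ (fun y => Real.log (Real.Gamma y)) x :=
  (Real.differentiableAt_Gamma fun m =>
    ((neg_nonpos.mpr m.cast_nonneg).trans_lt hx).ne').log (Real.Gamma_pos_of_pos hx).ne'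

lemma digamma_rec {x : ℝ} (hx : 0 < x) : digamma (x + 1) = digamma x + 1 / x := by
  unfold digamma
  rw [← deriv_comp_add_const, one_div, ← Real.deriv_log,
    ← deriv_add (diffLG hx) (Real.differentiableAt_log hx.ne')]
  apply Filter.EventuallyEq.deriv_eq
  filter_upwards [eventually_gt_nhds hx] with y hy
  rw [Real.Gamma_add_one hy.ne', Real.log_mul hy.ne' (Real.Gamma_pos_of_pos hy).ne', add_comm]
  rfl

lemma digamma_ge {x : ℝ} (hx : 0 < x) : Real.log x ≤ digamma (x + 1) := by
  have h := Real.convexOn_log_Gamma.slope_le_deriv (mem_Ioi.mpr hx)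
    (mem_Ioi.mpr (by linarith : (0:ℝ) < x + 1)) (by linarith)
    (by simpa [Function.comp_def] using diffLG (by linarith : (0:ℝ) < x + 1))
  rw [slope_def_field] at h
  simp only [Function.comp_apply] at h
  rw [Real.Gamma_add_one hx.ne',
    Real.log_mul hx.ne' (Real.Gamma_pos_of_pos hx).ne'] at h
  have e1 : (Real.log x + Real.log (Real.Gamma x) - Real.log (Real.Gamma x)) / (x + 1 - x)
      = Real.log x := by
    rw [show x + 1 - x = (1:ℝ) by ring, div_one]; ring
  rw [e1] at h
  exact h.trans_eq (by simp [digamma, Function.comp_def])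

lemma digamma_le {x : ℝ} (hx : 0 < x) : digamma (x + 1) ≤ Real.log (x + 1) := by
  have hx1 : (0:ℝ) < x + 1 := by linarith
  have h := Real.convexOn_log_Gamma.deriv_le_slope (mem_Ioi.mpr hx1)
    (mem_Ioi.mpr (by linarith : (0:ℝ) < x + 2)) (by linarith)
    (by simpa [Function.comp_def] using diffLG hx1)
  rw [slope_def_field] at h
  simp only [Function.comp_apply] at h
  rw [show x + 2 = (x + 1) + 1 by ring, Real.Gamma_add_one hx1.ne',
    Real.log_mul hx1.ne' (Real.Gamma_pos_of_pos hx1).ne'] at h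
  have e1 : (Real.log (x+1) + Real.log (Real.Gamma (x+1)) - Real.log (Real.Gamma (x+1)))
      / (x + 1 + 1 - (x + 1)) = Real.log (x+1) := by
    rw [show x + 1 + 1 - (x+1) = (1:ℝ) by ring, div_one]; ring
  rw [e1] at h
  exact le_trans (le_of_eq (by simp [digamma, Function.comp_def])) h


lemma log_lb {t : ℝ} (h0 : 0 < t) (h1 : t < 1) :
    2*t + 2*t^3/3 + 2*t^5/5 + 2*t^7/7 < Real.log (1+t) - Real.log (1-t) := by
  set φ : ℝ → ℝ := fun s => Real.log (1+s) - Real.log (1-s)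
      - (2*s + 2*s^3/3 + 2*s^5/5 + 2*s^7/7) with hφ
  have hder : ∀ s, 0 ≤ s → s < 1 → HasDerivAt φ
      (1/(1+s) + 1/(1-s) - (2 + 2*s^2 + 2*s^4 + 2*s^6)) s := by
    intro s hs0 hs1
    have hp : (0:ℝ) < 1 + s := by linarith
    have hm : (0:ℝ) < 1 - s := by linarith
    have d1 : HasDerivAt (fun s : ℝ => Real.log (1+s)) (1/(1+s)) s := by
      simpa using ((hasDerivAt_id s).const_add 1).log hp.ne'
    have d2 : HasDerivAt (fun s : ℝ => Real.log (1-s)) (-1/(1-s)) s := by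
      simpa using ((hasDerivAt_id s).const_sub 1).log hm.ne'
    have d3 : HasDerivAt (fun s : ℝ => 2*s + 2*s^3/3 + 2*s^5/5 + 2*s^7/7)
        (2 + 2*s^2 + 2*s^4 + 2*s^6) s := by
      have p3 := hasDerivAt_pow 3 s
      have p5 := hasDerivAt_pow 5 s
      have p7 := hasDerivAt_pow 7 s
      have pid := hasDerivAt_id s
      exact ((((pid.const_mul 2).add ((p3.const_mul 2).div_const 3)).add
        ((p5.const_mul 2).div_const 5)).add ((p7.const_mul 2).div_const 7)).congr_deriv
        (by push_cast; ring)
    exact ((d1.sub d2).sub d3).congr_deriv (by ring)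
  have key : StrictMonoOn φ (Icc 0 t) := by
    apply strictMonoOn_of_deriv_pos (convex_Icc _ _)
    · intro s hs
      exact ((hder s hs.1 (lt_of_le_of_lt hs.2 h1)).differentiableAt.continuousAt).continuousWithinAt
    · intro s hs
      rw [interior_Icc] at hs
      have hs0 : 0 < s := hs.1
      have hs1 : s < 1 := lt_trans hs.2 h1
      rw [(hder s hs0.le hs1).deriv]
      have hp : (0:ℝ) < 1 + s := by linarith
      have hm : (0:ℝ) < 1 - s := by linarith
      have e : 1/(1+s) + 1/(1-s) - (2 + 2*s^2 + 2*s^4 + 2*s^6)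
          = 2*s^8 / ((1+s)*(1-s)) := by
        field_simp
        ring
      rw [e]
      positivity
  have h := key (left_mem_Icc.mpr h0.le) (right_mem_Icc.mpr h0.le) h0
  simp only [hφ] at h
  norm_num at h
  linarith [h]

lemma log_ub {t : ℝ} (h0 : 0 < t) (h1 : t < 1) :
    Real.log (1+t) - Real.log (1-t)
      < 2*t + 2*t^3/3 + 2*t^5/5 + 2*t^7/(7*(1-t^2)) := by
  set φ : ℝ → ℝ := fun s => 2*s + 2*s^3/3 + 2*s^5/5 + 2*s^7/(7*(1-s^2))
      - (Real.log (1+s) - Real.log (1-s)) with hφ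
  have hder : ∀ s, 0 ≤ s → s < 1 → HasDerivAt φ
      ((4/7)*s^8/((1-s^2)^2)) s := by
    intro s hs0 hs1
    have hp : (0:ℝ) < 1 + s := by linarith
    have hm : (0:ℝ) < 1 - s := by linarith
    have hq : (0:ℝ) < 1 - s^2 := by nlinarith
    have d1 : HasDerivAt (fun s : ℝ => Real.log (1+s)) (1/(1+s)) s := by
      simpa using ((hasDerivAt_id s).const_add 1).log hp.ne'
    have d2 : HasDerivAt (fun s : ℝ => Real.log (1-s)) (-1/(1-s)) s := by
      simpa using ((hasDerivAt_id s).const_sub 1).log hm.ne'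
    have p3 := hasDerivAt_pow 3 s
    have p5 := hasDerivAt_pow 5 s
    have p7 := hasDerivAt_pow 7 s
    have pid := hasDerivAt_id s
    have dden : HasDerivAt (fun s : ℝ => 7*(1-s^2)) (7*(-(2*s))) s := by
      exact (((hasDerivAt_pow 2 s).const_sub 1).const_mul (7:ℝ)).congr_deriv (by push_cast; ring)
    have dfrac : HasDerivAt (fun s : ℝ => 2*s^7/(7*(1-s^2)))
        (((2*(7*s^6))*(7*(1-s^2)) - (2*s^7)*(7*(-(2*s))))/(7*(1-s^2))^2) s := by
      have hne : 7*(1-s^2) ≠ 0 := by positivity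
      exact ((p7.const_mul 2).div dden hne).congr_deriv (by push_cast; ring)
    have dpoly := ((pid.const_mul 2).add ((p3.const_mul 2).div_const 3)).add
        ((p5.const_mul 2).div_const 5)
    exact (((dpoly.add dfrac)).sub (d1.sub d2)).congr_deriv (by
      push_cast
      field_simp
      ring)
  have key : StrictMonoOn φ (Icc 0 t) := by
    apply strictMonoOn_of_deriv_pos (convex_Icc _ _)
    · intro s hs
      exact ((hder s hs.1 (lt_of_le_of_lt hs.2 h1)).differentiableAt.continuousAt).continuousWithinAt
    · intro s hs
      rw [interior_Icc] at hs
      have hs0 : 0 < s := hs.1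
      have hs1 : s < 1 := lt_trans hs.2 h1
      have hq : (0:ℝ) < 1 - s^2 := by nlinarith
      rw [(hder s hs0.le hs1).deriv]
      positivity
  have h := key (left_mem_Icc.mpr h0.le) (right_mem_Icc.mpr h0.le) h0
  simp only [hφ] at h
  norm_num at h
  linarith [h]

noncomputable def hfun (y : ℝ) : ℝ := 1 / (3 * y * (y + 1)) - 1 / (15 * y ^ 2 * (y + 1) ^ 2)
noncomputable def rfun (y : ℝ) : ℝ := 8 / (315 * y ^ 3 * (y + 1) ^ 3)

lemma log_conv {y : ℝ} (hy : 0 < y) :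
    Real.log ((y+2)/y) = Real.log (1 + 1/(y+1)) - Real.log (1 - 1/(y+1)) := by
  have h1 : (0:ℝ) < y + 1 := by linarith
  have e1 : (1:ℝ) + 1/(y+1) = (y+2)/(y+1) := by field_simp; ring
  have e2 : (1:ℝ) - 1/(y+1) = y/(y+1) := by field_simp; ring
  rw [e1, e2, Real.log_div (by positivity) (by positivity),
    Real.log_div (by positivity) (by positivity),
    Real.log_div (by positivity) (by positivity)]
  ring

lemma step_low {y : ℝ} (hy : 0 < y) :
    0 < Real.log ((y+2)/y) - 2/(y+1) - hfun y + hfun (y+1) := by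
  have h1 : (0:ℝ) < y + 1 := by linarith
  have h2 : (0:ℝ) < y + 2 := by linarith
  have ht0 : (0:ℝ) < 1/(y+1) := by positivity
  have ht1 : 1/(y+1) < 1 := by rw [div_lt_one h1]; linarith
  have hlog := log_lb ht0 ht1
  rw [← log_conv hy] at hlog
  have e : 2*(1/(y+1)) + 2*(1/(y+1))^3/3 + 2*(1/(y+1))^5/5 + 2*(1/(y+1))^7/7
      = 2/(y+1) + (2/(3*(y+1)^3) + 2/(5*(y+1)^5) + 2/(7*(y+1)^7)) := by
    field_simp
    ring
  rw [e] at hlog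
  have hrat : 2/(3*(y+1)^3) + 2/(5*(y+1)^5) + 2/(7*(y+1)^7) - hfun y + hfun (y+1)
      = (28 + 28*y + 78*y^2 + 64*y^3 + 16*y^4) / (105*y^2*(y+1)^7*(y+2)^2) := by
    simp only [hfun]
    rw [show y + 1 + 1 = y + 2 by ring]
    field_simp
    ring
  have hpos : 0 < (28 + 28*y + 78*y^2 + 64*y^3 + 16*y^4) / (105*y^2*(y+1)^7*(y+2)^2) := by
    apply div_pos
    · nlinarith [pow_pos hy 2, pow_pos hy 3, pow_pos hy 4]
    · exact mul_pos (mul_pos (mul_pos (by norm_num) (pow_pos hy 2)) (pow_pos h1 7))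
        (pow_pos h2 2)
  linarith [hrat, hpos]

lemma step_high {y : ℝ} (hy : 0 < y) :
    Real.log ((y+2)/y) - 2/(y+1) - hfun y + hfun (y+1) - rfun y + rfun (y+1) < 0 := by
  have h1 : (0:ℝ) < y + 1 := by linarith
  have h2 : (0:ℝ) < y + 2 := by linarith
  have ht0 : (0:ℝ) < 1/(y+1) := by positivity
  have ht1 : 1/(y+1) < 1 := by rw [div_lt_one h1]; linarith
  have hlog := log_ub ht0 ht1
  rw [← log_conv hy] at hlog
  have e : 2*(1/(y+1)) + 2*(1/(y+1))^3/3 + 2*(1/(y+1))^5/5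
        + 2*(1/(y+1))^7/(7*(1-(1/(y+1))^2))
      = 2/(y+1) + (2/(3*(y+1)^3) + 2/(5*(y+1)^5) + 2/(7*(y*(y+1)^5*(y+2)))) := by
    have hne : 1 - (1/(y+1))^2 = y*(y+2)/(y+1)^2 := by field_simp; ring
    rw [hne]
    field_simp
    ring
  rw [e] at hlog
  have hrat : 2/(3*(y+1)^3) + 2/(5*(y+1)^5) + 2/(7*(y*(y+1)^5*(y+2)))
        - hfun y + hfun (y+1) - rfun y + rfun (y+1)
      = -((64 + 184*y + 204*y^2 + 112*y^3 + 28*y^4) / (315*y^3*(y+1)^7*(y+2)^3)) := by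
    simp only [hfun, rfun]
    rw [show y + 1 + 1 = y + 2 by ring]
    field_simp
    ring
  have hpos : 0 < (64 + 184*y + 204*y^2 + 112*y^3 + 28*y^4) / (315*y^3*(y+1)^7*(y+2)^3) := by
    apply div_pos
    · nlinarith [pow_pos hy 2, pow_pos hy 3, pow_pos hy 4]
    · exact mul_pos (mul_pos (mul_pos (by norm_num) (pow_pos hy 3)) (pow_pos h1 7))
        (pow_pos h2 3)
  linarith [hrat, hpos, hlog]

noncomputable def gfun (y : ℝ) : ℝ := 2 * digamma (y + 1) - Real.log (y * (y + 1)) - hfun y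

lemma gdiff {y : ℝ} (hy : 0 < y) :
    gfun y - gfun (y + 1) = Real.log ((y+2)/y) - 2/(y+1) - hfun y + hfun (y+1) := by
  have h1 : (0:ℝ) < y + 1 := by linarith
  have h2 : (0:ℝ) < y + 2 := by linarith
  simp only [gfun]
  rw [digamma_rec h1, show y + 1 + 1 = y + 2 by ring,
    Real.log_mul hy.ne' h1.ne', Real.log_mul h1.ne' h2.ne',
    Real.log_div h2.ne' hy.ne']
  ring

lemma hfun_nonneg {z : ℝ} (hz : 1 ≤ z) : 0 ≤ hfun z := by
  have hz0 : (0:ℝ) < z := by linarith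
  have h1 : (0:ℝ) < z + 1 := by linarith
  simp only [hfun]
  rw [sub_nonneg, div_le_div_iff₀ (by positivity) (by positivity)]
  nlinarith [sq_nonneg z, sq_nonneg (z+1)]

lemma hfun_le {z : ℝ} (hz : 1 ≤ z) : hfun z ≤ 1/z := by
  have hz0 : (0:ℝ) < z := by linarith
  have h1 : (0:ℝ) < z + 1 := by linarith
  have key : 1 / (3 * z * (z + 1)) ≤ 1/z := by
    rw [div_le_div_iff₀ (by positivity) hz0]
    nlinarith
  have key2 : 0 ≤ 1 / (15 * z ^ 2 * (z + 1) ^ 2) := by positivity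
  simp only [hfun]; linarith

lemma rfun_nonneg {z : ℝ} (hz : 0 < z) : 0 ≤ rfun z := by
  have h1 : (0:ℝ) < z + 1 := by linarith
  simp only [rfun]; positivity

lemma rfun_le {z : ℝ} (hz : 1 ≤ z) : rfun z ≤ 2/z := by
  have hz0 : (0:ℝ) < z := by linarith
  have h1 : (0:ℝ) < z + 1 := by linarith
  simp only [rfun]
  rw [div_le_div_iff₀ (by positivity) hz0]
  nlinarith [pow_pos hz0 3, pow_pos h1 3, pow_le_pow_left₀ (by norm_num : (0:ℝ) ≤ 1) hz 3]

lemma log_ratio_le {z : ℝ} (hz : 0 < z) : Real.log (z+1) - Real.log z ≤ 1/z := by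
  have h := Real.log_le_sub_one_of_pos (show (0:ℝ) < (z+1)/z by positivity)
  rw [Real.log_div (by linarith) hz.ne'] at h
  have e : (z+1)/z - 1 = 1/z := by field_simp; ring
  linarith

lemma g_bound {z : ℝ} (hz : 1 ≤ z) : -(2/z) ≤ gfun z ∧ gfun z ≤ 2/z := by
  have hz0 : (0:ℝ) < z := by linarith
  have hge := digamma_ge hz0
  have hle := digamma_le hz0
  have hlr := log_ratio_le hz0
  have hh0 := hfun_nonneg hz
  have hh1 := hfun_le hz
  have h1z : (0:ℝ) < 1/z := by positivity
  simp only [gfun]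
  rw [Real.log_mul hz0.ne' (by linarith)]
  have h2z : 2/z = 1/z + 1/z := by ring
  constructor <;> linarith

lemma tends2 {z : ℝ} (hz : 0 < z) :
    Tendsto (fun n : ℕ => 2/(z + n)) atTop (𝓝 0) := by
  have h : Tendsto (fun n : ℕ => z + (n:ℝ)) atTop atTop :=
    tendsto_atTop_add_const_left _ z tendsto_natCast_atTop_atTop
  have := h.inv_tendsto_atTop.const_mul (2:ℝ)
  simpa [div_eq_mul_inv] using this

lemma g_tail {z : ℝ} (hz : 1 ≤ z) :
    Tendsto (fun n : ℕ => gfun (z + n)) atTop (𝓝 0) := by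
  have hz0 : (0:ℝ) < z := by linarith
  have hpos := tends2 hz0
  have hneg : Tendsto (fun n : ℕ => -(2/(z + n))) atTop (𝓝 0) := by
    simpa using hpos.neg
  refine tendsto_of_tendsto_of_tendsto_of_le_of_le hneg hpos ?_ ?_
  · intro n
    exact (g_bound (by have := n.cast_nonneg (α := ℝ); linarith : (1:ℝ) ≤ z + n)).1
  · intro n
    exact (g_bound (by have := n.cast_nonneg (α := ℝ); linarith : (1:ℝ) ≤ z + n)).2

lemma g_step {w : ℝ} (hw : 0 < w) : gfun (w + 1) < gfun w := by
  have h1 := gdiff hw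
  have h2 := step_low hw
  linarith

lemma G_step {w : ℝ} (hw : 0 < w) : gfun w - rfun w < gfun (w + 1) - rfun (w + 1) := by
  have h1 := gdiff hw
  have h2 := step_high hw
  linarith

lemma g_chain {z : ℝ} (hz : 0 < z) : ∀ n : ℕ, gfun (z + n) ≤ gfun z := by
  intro n
  induction n with
  | zero => simp
  | succ n ih =>
    have hzn : (0:ℝ) < z + n := by have := n.cast_nonneg (α := ℝ); linarith
    have := g_step hzn
    have e : z + ((n:ℝ) + 1) = (z + n) + 1 := by ring
    push_cast
    rw [e]
    linarith

lemma G_chain {z : ℝ} (hz : 0 < z) :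
    ∀ n : ℕ, gfun z - rfun z ≤ gfun (z + n) - rfun (z + n) := by
  intro n
  induction n with
  | zero => simp
  | succ n ih =>
    have hzn : (0:ℝ) < z + n := by have := n.cast_nonneg (α := ℝ); linarith
    have := G_step hzn
    have e : z + ((n:ℝ) + 1) = (z + n) + 1 := by ring
    push_cast
    rw [e]
    linarith

lemma r_tail {z : ℝ} (hz : 1 ≤ z) :
    Tendsto (fun n : ℕ => rfun (z + n)) atTop (𝓝 0) := by
  have hz0 : (0:ℝ) < z := by linarith
  refine tendsto_of_tendsto_of_tendsto_of_le_of_le tendsto_const_nhds (tends2 hz0) ?_ ?_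
  · intro n
    exact rfun_nonneg (by have := n.cast_nonneg (α := ℝ); linarith)
  · intro n
    exact rfun_le (by have := n.cast_nonneg (α := ℝ); linarith)

lemma g_pos {y : ℝ} (hy : 0 < y) : 0 < gfun y := by
  have h1 : (0:ℝ) < y + 1 := by linarith
  have hge : 0 ≤ gfun (y + 1) :=
    le_of_tendsto' (g_tail (by linarith : (1:ℝ) ≤ y + 1)) (g_chain h1)
  have := g_step hy
  linarith

lemma g_lt {y : ℝ} (hy : 0 < y) : gfun y < rfun y := by
  have h1 : (0:ℝ) < y + 1 := by linarith
  have htail : Tendsto (fun n : ℕ => gfun (y + 1 + n) - rfun (y + 1 + n)) atTop (𝓝 0) := by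
    have := (g_tail (by linarith : (1:ℝ) ≤ y + 1)).sub (r_tail (by linarith : (1:ℝ) ≤ y + 1))
    simpa using this
  have hle : gfun (y + 1) - rfun (y + 1) ≤ 0 :=
    ge_of_tendsto' htail (G_chain h1)
  have := G_step hy
  linarith

theorem stmt10 (x : ℝ) (hx : 0 < x) :
    1 / (3 * x * (x + 1)) - 1 / (15 * x ^ 2 * (x + 1) ^ 2)
      < 2 * digamma (x + 1) - Real.log (x * (x + 1)) ∧
    2 * digamma (x + 1) - Real.log (x * (x + 1))
      < 1 / (3 * x * (x + 1)) - 1 / (15 * x ^ 2 * (x + 1) ^ 2)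
        + 8 / (315 * x ^ 3 * (x + 1) ^ 3) := by
  have h1 := g_pos hx
  have h2 := g_lt hx
  simp only [gfun, hfun, rfun] at h1 h2
  constructor <;> linarith
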